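/- Let n+1 ≥ m ≥ 2 and d_1 ≥ d_2 ≥ 2, and let f = Σ_{r=0}^n x_r^{d_1} g_r be a CW-Nagata polynomial of bidegree (d_1,d_2). Then the class of L = X_0 + X_1 + ⋯ + X_n in A_1, where A = T/Ann(f), is a weak Lefschetz element: for every i, the multiplication map ·L: A_i → A_{i+1} has maximal rank, i.e. rank equal to min(dim_K A_i, dim_K A_{i+1}). In particular A has the Weak Lefschetz Property. -/

import Mathlib

open MvPolynomial

namespace CW

variable {σ K : Type*} [CommSemiring K]

/-- A generic "monomial contraction-type" action of the polynomial ring on itself,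
determined by a structure coefficient `ν c a` (the coefficient produced when the
operator monomial with exponent `a` acts on the monomial with exponent `c`). -/
noncomputable def genAct (ν : (σ →₀ ℕ) → (σ →₀ ℕ) → K) (α f : MvPolynomial σ K) :
    MvPolynomial σ K :=
  Finsupp.sum (AddMonoidAlgebra.coeff α) fun a ca =>
    Finsupp.sum (AddMonoidAlgebra.coeff f) fun c cf => monomial (c - a) (ν c a * (ca * cf))

theorem genAct_zero_left (ν : (σ →₀ ℕ) → (σ →₀ ℕ) → K) (f : MvPolynomial σ K) :
    genAct ν 0 f = 0 :=
  Finsupp.sum_zero_index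

theorem genAct_zero_right (ν : (σ →₀ ℕ) → (σ →₀ ℕ) → K) (α : MvPolynomial σ K) :
    genAct ν α 0 = 0 := by
  unfold genAct
  simp only [AddMonoidAlgebra.coeff_zero, Finsupp.sum_zero_index, Finsupp.sum_fun_zero]

theorem genAct_add_left (ν : (σ →₀ ℕ) → (σ →₀ ℕ) → K) (α β f : MvPolynomial σ K) :
    genAct ν (α + β) f = genAct ν α f + genAct ν β f := by
  unfold genAct
  rw [AddMonoidAlgebra.coeff_add]
  apply Finsupp.sum_add_index'
  · intro a
    simp only [mul_zero, zero_mul, map_zero, Finsupp.sum_fun_zero]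
  · intro a b₁ b₂
    rw [← Finsupp.sum_add]
    apply Finsupp.sum_congr
    intro c _
    rw [add_mul, mul_add, map_add]

theorem genAct_add_right (ν : (σ →₀ ℕ) → (σ →₀ ℕ) → K) (α f g : MvPolynomial σ K) :
    genAct ν α (f + g) = genAct ν α f + genAct ν α g := by
  unfold genAct
  rw [← Finsupp.sum_add]
  apply Finsupp.sum_congr
  intro a _
  rw [AddMonoidAlgebra.coeff_add]
  apply Finsupp.sum_add_index'
  · intro c
    simp only [mul_zero, map_zero]
  · intro c c₁ c₂
    rw [mul_add, mul_add, map_add]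

theorem genAct_monomial (ν : (σ →₀ ℕ) → (σ →₀ ℕ) → K) (a c : σ →₀ ℕ) (r s : K) :
    genAct ν (monomial a r) (monomial c s) = monomial (c - a) (ν c a * (r * s)) := by
  unfold genAct
  rw [← single_eq_monomial a r, ← single_eq_monomial c s]
  rw [AddMonoidAlgebra.coeff_single, AddMonoidAlgebra.coeff_single]
  rw [Finsupp.sum_single_index, Finsupp.sum_single_index]
  · simp only [mul_zero, map_zero]
  · simp only [mul_zero, zero_mul, map_zero, Finsupp.sum_fun_zero]

theorem genAct_mul {ν : (σ →₀ ℕ) → (σ →₀ ℕ) → K}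
    (hν : ∀ c a b, ν c (a + b) = ν c b * ν (c - b) a) (α β f : MvPolynomial σ K) :
    genAct ν (α * β) f = genAct ν α (genAct ν β f) := by
  induction α using MvPolynomial.induction_on' with
  | add p q hp hq => rw [add_mul, genAct_add_left, hp, hq, genAct_add_left]
  | monomial a r =>
    induction β using MvPolynomial.induction_on' with
    | add p q hp hq =>
      rw [mul_add, genAct_add_left, hp, hq, ← genAct_add_right, genAct_add_left]
    | monomial b s =>
      induction f using MvPolynomial.induction_on' with
      | add p q hp hq =>
        rw [genAct_add_right, hp, hq, ← genAct_add_right, ← genAct_add_right]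
      | monomial c t =>
        rw [monomial_mul, genAct_monomial, genAct_monomial, genAct_monomial,
          show c - (a + b) = c - b - a from by rw [tsub_tsub, add_comm], hν]
        congr 1
        ring

/-- The annihilator ideal of `f` under the action `genAct ν`. -/
noncomputable def annG (ν : (σ →₀ ℕ) → (σ →₀ ℕ) → K)
    (hν : ∀ c a b, ν c (a + b) = ν c b * ν (c - b) a) (f : MvPolynomial σ K) :
    Ideal (MvPolynomial σ K) where
  carrier := {α | genAct ν α f = 0}
  zero_mem' := genAct_zero_left ν f
  add_mem' := by
    intro a b ha hb
    show genAct ν (a + b) f = 0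
    rw [genAct_add_left, ha, hb, add_zero]
  smul_mem' := by
    intro c α hα
    show genAct ν (c * α) f = 0
    rw [genAct_mul hν, hα, genAct_zero_right]

/-- Structure coefficient of the contraction (apolarity) action: `X^a` sends `x^c`
to `x^(c-a)` if `a ≤ c` and to `0` otherwise. -/
noncomputable def cnu (c a : σ →₀ ℕ) : K :=
  open scoped Classical in if a ≤ c then 1 else 0

theorem cnu_mul (c a b : σ →₀ ℕ) :
    (cnu c (a + b) : K) = cnu c b * cnu (c - b) a := by
  classical
  unfold cnu
  by_cases hb : b ≤ c
  · by_cases ha : a ≤ c - b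
    · have h : a + b ≤ c := (le_tsub_iff_right hb).mp ha
      simp [hb, ha, h]
    · have h : ¬ a + b ≤ c := fun h => ha ((le_tsub_iff_right hb).mpr h)
      simp [hb, ha, h]
  · have h : ¬ a + b ≤ c := fun h => hb (le_trans le_add_self h)
    simp [hb, h]

/-- The contraction action `α ∘ f`. -/
noncomputable def cAct (α f : MvPolynomial σ K) : MvPolynomial σ K :=
  genAct cnu α f

/-- The annihilator `Ann(f)` of `f` under the contraction action, as an ideal. -/
noncomputable def cAnn (f : MvPolynomial σ K) : Ideal (MvPolynomial σ K) :=
  annG cnu cnu_mul f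

theorem mem_cAnn {f α : MvPolynomial σ K} : α ∈ cAnn f ↔ cAct α f = 0 := Iff.rfl

/-- The `K`-submodule of polynomials all of whose monomials satisfy `P`. -/
noncomputable def bihom (K : Type*) [CommSemiring K] {σ : Type*} (P : (σ →₀ ℕ) → Prop) :
    Submodule K (MvPolynomial σ K) where
  carrier := {p | ∀ c ∈ p.support, P c}
  zero_mem' := by
    intro c hc
    simp at hc
  add_mem' := by
    classical
    intro p q hp hq c hc
    rcases Finset.mem_union.mp (MvPolynomial.support_add hc) with h | h
    · exact hp c h
    · exact hq c h
  smul_mem' := by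
    intro k p hp c hc
    exact hp c (MvPolynomial.support_smul hc)

/-- The x-degree of an exponent vector. -/
def degX {n m : ℕ} (c : (Fin (n + 1) ⊕ Fin m) →₀ ℕ) : ℕ := ∑ r, c (Sum.inl r)

/-- The u-degree of an exponent vector. -/
def degU {n m : ℕ} (c : (Fin (n + 1) ⊕ Fin m) →₀ ℕ) : ℕ := ∑ k, c (Sum.inr k)

/-- The bihomogeneous component `T_(i,j)`. -/
noncomputable def Tbi (K : Type*) [CommSemiring K] {n m : ℕ} (i j : ℕ) :
    Submodule K (MvPolynomial (Fin (n + 1) ⊕ Fin m) K) :=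
  bihom K fun c => degX c = i ∧ degU c = j

/-- The bigraded component `A_(i,j)` of `A = T ⧸ Ann(f)`: the image of `T_(i,j)`
in the quotient. -/
noncomputable def Abi {K : Type*} [Field K] {n m : ℕ}
    (f : MvPolynomial (Fin (n + 1) ⊕ Fin m) K) (i j : ℕ) :
    Submodule K (MvPolynomial (Fin (n + 1) ⊕ Fin m) K ⧸ cAnn f) :=
  (Tbi K i j).map (Ideal.Quotient.mkₐ K (cAnn f)).toLinearMap

theorem descFactorial_add_eq (v a b : ℕ) :
    v.descFactorial (a + b) = v.descFactorial b * (v - b).descFactorial a := by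
  induction a with
  | zero => simp
  | succ a ih =>
    have h : a + 1 + b = (a + b) + 1 := by omega
    rw [h, Nat.descFactorial_succ, ih, Nat.descFactorial_succ, Nat.sub_sub]
    ring_nf

/-- Structure coefficient of the differentiation action: the operator monomial `X^a`
sends `x^c` to `(∏ᵢ (cᵢ)(cᵢ-1)⋯(cᵢ-aᵢ+1)) x^(c-a)`. -/
noncomputable def dnu {σ K : Type*} [CommSemiring K] [Fintype σ] (c a : σ →₀ ℕ) : K :=
  ((∏ i, (c i).descFactorial (a i) : ℕ) : K)

theorem dnu_mul {σ K : Type*} [CommSemiring K] [Fintype σ] (c a b : σ →₀ ℕ) :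
    (dnu c (a + b) : K) = dnu c b * dnu (c - b) a := by
  unfold dnu
  rw [← Nat.cast_mul, ← Finset.prod_mul_distrib]
  congr 1
  apply Finset.prod_congr rfl
  intro i _
  rw [Finsupp.add_apply, Finsupp.tsub_apply, descFactorial_add_eq]

/-- The differentiation action `α(f)`, where `X_i` acts as `∂/∂x_i`. -/
noncomputable def dAct {σ K : Type*} [CommSemiring K] [Fintype σ]
    (α f : MvPolynomial σ K) : MvPolynomial σ K :=
  genAct dnu α f

/-- The annihilator `Ann(f)` of `f` under the differentiation action, as an ideal. -/
noncomputable def dAnn {σ K : Type*} [CommSemiring K] [Fintype σ]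
    (f : MvPolynomial σ K) : Ideal (MvPolynomial σ K) :=
  annG dnu dnu_mul f

theorem mem_dAnn {σ K : Type*} [CommSemiring K] [Fintype σ] {f α : MvPolynomial σ K} :
    α ∈ dAnn f ↔ dAct α f = 0 := Iff.rfl

/-- The total-degree-`k` component `A_k` of `A = T ⧸ Ann(f)` (differentiation action):
the image in the quotient of the space of homogeneous operators of order `k`. -/
noncomputable def Adeg {K : Type*} [Field K] {n m : ℕ}
    (f : MvPolynomial (Fin (n + 1) ⊕ Fin m) K) (k : ℕ) :
    Submodule K (MvPolynomial (Fin (n + 1) ⊕ Fin m) K ⧸ dAnn f) :=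
  (bihom K fun c => degX c + degU c = k).map (Ideal.Quotient.mkₐ K (dAnn f)).toLinearMap
section AuxLin

variable {σ K : Type*} [CommSemiring K]

theorem genAct_smul_left (ν : (σ →₀ ℕ) → (σ →₀ ℕ) → K) (k : K) (α f : MvPolynomial σ K) :
    genAct ν (k • α) f = k • genAct ν α f := by
  unfold genAct
  rw [Finsupp.smul_sum]
  rw [AddMonoidAlgebra.coeff_smul]
  rw [Finsupp.sum_smul_index (fun a => by simp)]
  apply Finsupp.sum_congr
  intro a _
  rw [Finsupp.smul_sum]
  apply Finsupp.sum_congr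
  intro c _
  simp only [MvPolynomial.smul_monomial, smul_eq_mul]
  ring_nf

theorem genAct_smul_right (ν : (σ →₀ ℕ) → (σ →₀ ℕ) → K) (k : K) (α f : MvPolynomial σ K) :
    genAct ν α (k • f) = k • genAct ν α f := by
  unfold genAct
  rw [Finsupp.smul_sum]
  apply Finsupp.sum_congr
  intro a _
  rw [AddMonoidAlgebra.coeff_smul]
  rw [Finsupp.sum_smul_index (fun c => by simp)]
  rw [Finsupp.smul_sum]
  apply Finsupp.sum_congr
  intro c _
  simp only [MvPolynomial.smul_monomial, smul_eq_mul]
  ring_nf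

theorem genAct_sum_left (ν : (σ →₀ ℕ) → (σ →₀ ℕ) → K) {ι : Type*} (s : Finset ι)
    (F : ι → MvPolynomial σ K) (f : MvPolynomial σ K) :
    genAct ν (∑ i ∈ s, F i) f = ∑ i ∈ s, genAct ν (F i) f := by
  classical
  induction s using Finset.induction_on with
  | empty => simp [genAct_zero_left]
  | insert _ _ h ih => rw [Finset.sum_insert h, genAct_add_left, ih, Finset.sum_insert h]

theorem genAct_sum_right (ν : (σ →₀ ℕ) → (σ →₀ ℕ) → K) {ι : Type*} (s : Finset ι)
    (α : MvPolynomial σ K) (F : ι → MvPolynomial σ K) :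
    genAct ν α (∑ i ∈ s, F i) = ∑ i ∈ s, genAct ν α (F i) := by
  classical
  induction s using Finset.induction_on with
  | empty => simp [genAct_zero_right]
  | insert _ _ h ih => rw [Finset.sum_insert h, genAct_add_right, ih, Finset.sum_insert h]

end AuxLin

section AuxMaps

variable {σ K : Type*} [CommSemiring K] [Fintype σ]

/-- `α ↦ α(f)` as a linear map. -/
noncomputable def Emap (f : MvPolynomial σ K) : MvPolynomial σ K →ₗ[K] MvPolynomial σ K where
  toFun α := dAct α f
  map_add' a b := genAct_add_left _ a b f
  map_smul' k a := genAct_smul_left _ k a f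

/-- `h ↦ L(h)` as a linear map. -/
noncomputable def Dmap (L : MvPolynomial σ K) : MvPolynomial σ K →ₗ[K] MvPolynomial σ K where
  toFun h := dAct L h
  map_add' a b := genAct_add_right _ L a b
  map_smul' k a := genAct_smul_right _ k L a

@[simp] theorem Emap_apply (f α : MvPolynomial σ K) : Emap f α = dAct α f := rfl
@[simp] theorem Dmap_apply (L h : MvPolynomial σ K) : Dmap L h = dAct L h := rfl

theorem Dmap_Emap (L f α : MvPolynomial σ K) : Dmap L (Emap f α) = Emap f (L * α) := by
  simp only [Emap_apply, Dmap_apply, dAct]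
  rw [genAct_mul dnu_mul]

end AuxMaps
section AuxDnu

variable {σ : Type*} [Fintype σ] {K : Type*} [CommSemiring K]

theorem dnu_eq_zero_iff [CharZero K] (c a : σ →₀ ℕ) :
    (dnu c a : K) = 0 ↔ ¬ a ≤ c := by
  unfold dnu
  rw [Nat.cast_eq_zero, Finset.prod_eq_zero_iff]
  constructor
  · rintro ⟨i, -, hi⟩ hle
    have := Finsupp.le_def.mp hle i
    rw [Nat.descFactorial_eq_zero_iff_lt] at hi
    omega
  · intro h
    rw [Finsupp.le_def] at h
    push_neg at h
    obtain ⟨i, hi⟩ := h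
    exact ⟨i, Finset.mem_univ i, Nat.descFactorial_eq_zero_iff_lt.mpr hi⟩

theorem dnu_ne_zero [CharZero K] {c a : σ →₀ ℕ} (h : a ≤ c) : (dnu c a : K) ≠ 0 := by
  rw [Ne, dnu_eq_zero_iff]
  exact not_not_intro h

theorem dnu_single_one [DecidableEq σ] (c : σ →₀ ℕ) (s : σ) :
    (dnu c (Finsupp.single s 1) : K) = (c s : K) := by
  unfold dnu
  congr 1
  rw [Finset.prod_eq_single s]
  · rw [Finsupp.single_apply, if_pos rfl, Nat.descFactorial_one]
  · intro i _ hi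
    rw [Finsupp.single_apply, if_neg (Ne.symm hi), Nat.descFactorial_zero]
  · intro h
    exact absurd (Finset.mem_univ s) h

theorem dAct_monomial_monomial (a c : σ →₀ ℕ) (r s : K) :
    dAct (monomial a r) (monomial c s) = monomial (c - a) ((dnu c a : K) * (r * s)) :=
  genAct_monomial _ a c r s

end AuxDnu

section AuxDeg

variable {n m : ℕ}

theorem degX_add (a b : (Fin (n + 1) ⊕ Fin m) →₀ ℕ) : degX (a + b) = degX a + degX b := by
  unfold degX
  simp [Finsupp.add_apply, Finset.sum_add_distrib]

theorem degU_add (a b : (Fin (n + 1) ⊕ Fin m) →₀ ℕ) : degU (a + b) = degU a + degU b := by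
  unfold degU
  simp [Finsupp.add_apply, Finset.sum_add_distrib]

theorem degX_single_inl (r : Fin (n + 1)) (k : ℕ) :
    degX (Finsupp.single (Sum.inl r : Fin (n + 1) ⊕ Fin m) k) = k := by
  unfold degX
  rw [Finset.sum_eq_single r]
  · simp
  · intro s _ hs
    rw [Finsupp.single_apply, if_neg (by simp [hs.symm])]
  · intro h; exact absurd (Finset.mem_univ r) h

theorem degU_single_inl (r : Fin (n + 1)) (k : ℕ) :
    degU (Finsupp.single (Sum.inl r : Fin (n + 1) ⊕ Fin m) k) = 0 := by
  unfold degU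
  apply Finset.sum_eq_zero
  intro j _
  rw [Finsupp.single_apply, if_neg (by simp)]

theorem degX_mapDomain (β : Fin m →₀ ℕ) :
    degX ((β.mapDomain Sum.inr : (Fin (n + 1) ⊕ Fin m) →₀ ℕ)) = 0 := by
  unfold degX
  apply Finset.sum_eq_zero
  intro r _
  exact Finsupp.mapDomain_notin_range β _ (by simp)

theorem degU_mapDomain (β : Fin m →₀ ℕ) :
    degU ((β.mapDomain Sum.inr : (Fin (n + 1) ⊕ Fin m) →₀ ℕ)) = ∑ k, β k := by
  unfold degU
  apply Finset.sum_congr rfl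
  intro k _
  exact Finsupp.mapDomain_apply Sum.inr_injective β k

/-- Exponent of the `r`-th monomial of a CW-Nagata polynomial. -/
noncomputable def cExp (d₁ : ℕ) (g : Fin (n + 1) → (Fin m →₀ ℕ)) (r : Fin (n + 1)) :
    (Fin (n + 1) ⊕ Fin m) →₀ ℕ :=
  Finsupp.single (Sum.inl r) d₁ + (g r).mapDomain Sum.inr

theorem cExp_inl (d₁ : ℕ) (g : Fin (n + 1) → (Fin m →₀ ℕ)) (r s : Fin (n + 1)) :
    cExp d₁ g r (Sum.inl s) = if s = r then d₁ else 0 := by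
  unfold cExp
  rw [Finsupp.add_apply, Finsupp.mapDomain_notin_range _ _ (by simp), add_zero,
    Finsupp.single_apply]
  simp [eq_comm]

theorem cExp_inr (d₁ : ℕ) (g : Fin (n + 1) → (Fin m →₀ ℕ)) (r : Fin (n + 1)) (k : Fin m) :
    cExp d₁ g r (Sum.inr k) = g r k := by
  unfold cExp
  rw [Finsupp.add_apply, Finsupp.single_apply, if_neg (by simp),
    Finsupp.mapDomain_apply Sum.inr_injective, zero_add]

end AuxDeg
section AuxBihom

theorem mem_bihom {K : Type*} [CommSemiring K] {σ : Type*} {P : (σ →₀ ℕ) → Prop}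
    {p : MvPolynomial σ K} : p ∈ bihom K P ↔ ∀ c ∈ p.support, P c := Iff.rfl

theorem monomial_mem_bihom {K : Type*} [CommSemiring K] {σ : Type*} {P : (σ →₀ ℕ) → Prop}
    {e : σ →₀ ℕ} (h : P e) (t : K) : monomial e t ∈ bihom K P := by
  classical
  intro c hc
  rw [support_monomial] at hc
  split at hc
  · simp at hc
  · rw [Finset.mem_singleton] at hc
    rwa [hc]

theorem degX_add_degU {n m : ℕ} (c : (Fin (n + 1) ⊕ Fin m) →₀ ℕ) :
    (c.sum fun _ e => e) = degX c + degU c := by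
  rw [Finsupp.sum_fintype _ _ (fun _ => rfl), Fintype.sum_sum_type]
  rfl

theorem bihom_le_restrict {K : Type*} [CommSemiring K] {n m : ℕ} (i : ℕ) :
    (bihom K fun c : (Fin (n + 1) ⊕ Fin m) →₀ ℕ => degX c + degU c = i) ≤
      MvPolynomial.restrictTotalDegree _ K i := by
  intro p hp
  rw [MvPolynomial.mem_restrictTotalDegree]
  apply Finset.sup_le
  intro c hc
  rw [degX_add_degU]
  exact le_of_eq (hp c hc)

instance bihom_fd {K : Type*} [Field K] {n m : ℕ} (i : ℕ) :
    FiniteDimensional K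
      (bihom K fun c : (Fin (n + 1) ⊕ Fin m) →₀ ℕ => degX c + degU c = i) :=
  Submodule.finiteDimensional_of_le (bihom_le_restrict i)

open Module in
theorem finrank_map_eq_of_ker {K M N N' : Type*} [Field K] [AddCommGroup M] [Module K M]
    [AddCommGroup N] [Module K N] [AddCommGroup N'] [Module K N']
    (p : Submodule K M) [FiniteDimensional K p] (φ : M →ₗ[K] N) (ψ : M →ₗ[K] N')
    (h : ∀ x ∈ p, (φ x = 0 ↔ ψ x = 0)) :
    finrank K (p.map φ) = finrank K (p.map ψ) := by
  have e1 : p.map φ = LinearMap.range (φ ∘ₗ p.subtype) := by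
    rw [LinearMap.range_comp, Submodule.range_subtype]
  have e2 : p.map ψ = LinearMap.range (ψ ∘ₗ p.subtype) := by
    rw [LinearMap.range_comp, Submodule.range_subtype]
  have hker : LinearMap.ker (φ ∘ₗ p.subtype) = LinearMap.ker (ψ ∘ₗ p.subtype) := by
    ext x
    simp only [LinearMap.mem_ker, LinearMap.comp_apply, Submodule.coe_subtype]
    exact h x x.2
  have r1 := LinearMap.finrank_range_add_finrank_ker (φ ∘ₗ p.subtype)
  have r2 := LinearMap.finrank_range_add_finrank_ker (ψ ∘ₗ p.subtype)
  rw [e1, e2]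
  rw [hker] at r1
  omega

end AuxBihom
section AuxPsi

variable {K : Type*} [Field K] {n m : ℕ}

open Classical in
/-- The "integration" map on exponents used as a one-sided inverse of `D = Σ ∂/∂x_r`. -/
noncomputable def psiFun (g : Fin (n + 1) → (Fin m →₀ ℕ)) (χ : (Fin (n + 1) ⊕ Fin m) →₀ ℕ) :
    MvPolynomial (Fin (n + 1) ⊕ Fin m) K :=
  if h : ∃ r, χ (Sum.inl r) ≠ 0 then
    ((χ (Sum.inl h.choose) + 1 : ℕ) : K)⁻¹ • monomial (χ + Finsupp.single (Sum.inl h.choose) 1) 1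
  else if h2 : ∃ r, χ = (g r).mapDomain Sum.inr then
    monomial (χ + Finsupp.single (Sum.inl h2.choose) 1) 1
  else 0

set_option maxHeartbeats 1000000 in
/-- Linear extension of `psiFun`. -/
noncomputable def Psi (g : Fin (n + 1) → (Fin m →₀ ℕ)) :
    MvPolynomial (Fin (n + 1) ⊕ Fin m) K →ₗ[K] MvPolynomial (Fin (n + 1) ⊕ Fin m) K where
  toFun p := Finsupp.sum (AddMonoidAlgebra.coeff p) fun χ t => t • psiFun g χ
  map_add' p q := Finsupp.sum_add_index' (h := fun χ t => t • psiFun g χ) (fun χ => by rw [zero_smul])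
    (fun χ t₁ t₂ => by rw [add_smul])
  map_smul' k p := by
    simp only [RingHom.id_apply]
    rw [AddMonoidAlgebra.coeff_smul]
    rw [Finsupp.sum_smul_index (fun χ => zero_smul K (psiFun g χ))]
    rw [Finsupp.smul_sum]
    exact Finsupp.sum_congr fun χ _ => mul_smul k (MvPolynomial.coeff χ p) (psiFun g χ)

set_option maxHeartbeats 1000000 in
theorem Psi_monomial (g : Fin (n + 1) → (Fin m →₀ ℕ)) (χ : (Fin (n + 1) ⊕ Fin m) →₀ ℕ) (t : K) :
    Psi g (monomial χ t) = t • psiFun g χ := by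
  rw [← single_eq_monomial]
  show Finsupp.sum (Finsupp.single χ t) (fun χ t => t • psiFun (K := K) g χ) = t • psiFun g χ
  exact Finsupp.sum_single_index (zero_smul K (psiFun (K := K) g χ))

theorem psiFun_pos (g : Fin (n + 1) → (Fin m →₀ ℕ)) {χ : (Fin (n + 1) ⊕ Fin m) →₀ ℕ}
    {r : Fin (n + 1)} (hr : χ (Sum.inl r) ≠ 0) (huniq : ∀ s, χ (Sum.inl s) ≠ 0 → s = r) :
    psiFun (K := K) g χ =
      ((χ (Sum.inl r) + 1 : ℕ) : K)⁻¹ • monomial (χ + Finsupp.single (Sum.inl r) 1) 1 := by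
  have h : ∃ s, χ (Sum.inl s) ≠ 0 := ⟨r, hr⟩
  rw [psiFun, dif_pos h, huniq h.choose h.choose_spec]

theorem psiFun_g {g : Fin (n + 1) → (Fin m →₀ ℕ)} (hginj : Function.Injective g)
    {χ : (Fin (n + 1) ⊕ Fin m) →₀ ℕ} {r : Fin (n + 1)}
    (hz : ∀ s, χ (Sum.inl s) = 0) (hχ : χ = (g r).mapDomain Sum.inr) :
    psiFun (K := K) g χ = monomial (χ + Finsupp.single (Sum.inl r) 1) 1 := by
  have h : ¬ ∃ s, χ (Sum.inl s) ≠ 0 := by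
    push_neg
    exact hz
  have h2 : ∃ s, χ = (g s).mapDomain Sum.inr := ⟨r, hχ⟩
  have key : h2.choose = r := by
    apply hginj
    apply Finsupp.mapDomain_injective (Sum.inr_injective)
    rw [← h2.choose_spec]
    exact hχ
  rw [psiFun, dif_neg h, dif_pos h2, key]

end AuxPsi
section AuxCore

set_option linter.unusedSectionVars false

variable {K : Type*} [Field K] [CharZero K] {n m : ℕ} {d₁ d₂ : ℕ}
  {g : Fin (n + 1) → (Fin m →₀ ℕ)}

theorem Emap_monomial {f : MvPolynomial (Fin (n + 1) ⊕ Fin m) K}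
    (hf : f = ∑ r, monomial (cExp d₁ g r) (1 : K)) (e : (Fin (n + 1) ⊕ Fin m) →₀ ℕ) (t : K) :
    Emap f (monomial e t) =
      ∑ r, monomial (cExp d₁ g r - e) ((dnu (cExp d₁ g r) e : K) * t) := by
  rw [Emap_apply, dAct, hf, genAct_sum_right]
  refine Finset.sum_congr rfl fun r _ => ?_
  rw [genAct_monomial, mul_one]

theorem Dmap_L_monomial (c : (Fin (n + 1) ⊕ Fin m) →₀ ℕ) (t : K) :
    Dmap (∑ r, X (Sum.inl r) : MvPolynomial (Fin (n + 1) ⊕ Fin m) K) (monomial c t) =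
      ∑ r, monomial (c - Finsupp.single (Sum.inl r) 1) ((c (Sum.inl r) : K) * t) := by
  rw [Dmap_apply, dAct, genAct_sum_left]
  refine Finset.sum_congr rfl fun r _ => ?_
  rw [show (X (Sum.inl r) : MvPolynomial (Fin (n + 1) ⊕ Fin m) K) =
      monomial (Finsupp.single (Sum.inl r) 1) 1 from rfl, genAct_monomial,
    dnu_single_one, one_mul]

theorem le_cExp_inl_ne {e : (Fin (n + 1) ⊕ Fin m) →₀ ℕ} {r s : Fin (n + 1)}
    (h : e ≤ cExp d₁ g r) (hs : s ≠ r) : e (Sum.inl s) = 0 := by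
  have := Finsupp.le_def.mp h (Sum.inl s)
  rw [cExp_inl, if_neg hs] at this
  omega

theorem degX_eq_of_le {e : (Fin (n + 1) ⊕ Fin m) →₀ ℕ} {r : Fin (n + 1)}
    (h : e ≤ cExp d₁ g r) : degX e = e (Sum.inl r) := by
  unfold degX
  rw [Finset.sum_eq_single r]
  · intro s _ hs
    exact le_cExp_inl_ne h hs
  · intro hr
    exact absurd (Finset.mem_univ r) hr

theorem degU_le_of_le (hgdeg : ∀ r, (∑ k, g r k) = d₂) {e : (Fin (n + 1) ⊕ Fin m) →₀ ℕ}
    {r : Fin (n + 1)} (h : e ≤ cExp d₁ g r) : degU e ≤ d₂ := by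
  unfold degU
  calc ∑ k, e (Sum.inr k) ≤ ∑ k, g r k := by
        refine Finset.sum_le_sum fun k _ => ?_
        have := Finsupp.le_def.mp h (Sum.inr k)
        rwa [cExp_inr] at this
    _ = d₂ := hgdeg r

theorem surj_step (hd : d₂ ≤ d₁) (hgdeg : ∀ r, (∑ k, g r k) = d₂)
    (hginj : Function.Injective g) {f : MvPolynomial (Fin (n + 1) ⊕ Fin m) K}
    (hf : f = ∑ r, monomial (cExp d₁ g r) (1 : K)) (i : ℕ) (hi : d₁ ≤ i)
    (e : (Fin (n + 1) ⊕ Fin m) →₀ ℕ) (he : degX e + degU e = i + 1) :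
    Emap f (monomial e (1 : K)) ∈
      Submodule.map (Dmap (∑ r, X (Sum.inl r)))
        ((bihom K fun c => degX c + degU c = i).map (Emap f)) := by
  classical
  by_cases hex : ∃ r, e ≤ cExp d₁ g r
  · obtain ⟨r, hr⟩ := hex
    have hdegX : degX e = e (Sum.inl r) := degX_eq_of_le hr
    have hdegU : degU e ≤ d₂ := degU_le_of_le hgdeg hr
    have ha : 1 ≤ e (Sum.inl r) := by omega
    set e' := e - Finsupp.single (Sum.inl r) 1 with he'_def
    have hsum : Finsupp.single (Sum.inl r) 1 + e' = e := by
      ext x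
      rw [Finsupp.add_apply, he'_def, Finsupp.tsub_apply]
      by_cases hx : x = Sum.inl r
      · subst hx
        rw [Finsupp.single_apply, if_pos rfl]
        omega
      · rw [Finsupp.single_apply, if_neg (fun h => hx h.symm)]
        omega
    have hmem : (monomial e' (1 : K)) ∈ (bihom K fun c => degX c + degU c = i) := by
      refine monomial_mem_bihom ?_ 1
      have h1 : degX e = 1 + degX e' := by
        rw [← hsum, degX_add, degX_single_inl]
      have h2 : degU e = degU e' := by
        rw [← hsum, degU_add, degU_single_inl, zero_add]
      omega
    refine ⟨Emap f (monomial e' 1), ⟨monomial e' 1, hmem, rfl⟩, ?_⟩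
    rw [Dmap_Emap]
    have hLmul : (∑ s, X (Sum.inl s) : MvPolynomial (Fin (n + 1) ⊕ Fin m) K) * monomial e' 1 =
        ∑ s, monomial (Finsupp.single (Sum.inl s) 1 + e') 1 := by
      rw [Finset.sum_mul]
      refine Finset.sum_congr rfl fun s _ => ?_
      rw [show (X (Sum.inl s) : MvPolynomial (Fin (n + 1) ⊕ Fin m) K) =
        monomial (Finsupp.single (Sum.inl s) 1) 1 from rfl, monomial_mul, one_mul]
    rw [hLmul, map_sum, Finset.sum_eq_single r]
    · rw [hsum]
    · intro s _ hs
      rw [Emap_monomial hf]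
      apply Finset.sum_eq_zero
      intro u _
      have hz : (dnu (cExp d₁ g u) (Finsupp.single (Sum.inl s) 1 + e') : K) = 0 := by
        rw [dnu_eq_zero_iff]
        intro hle
        have h_at_s := Finsupp.le_def.mp hle (Sum.inl s)
        rw [Finsupp.add_apply, Finsupp.single_apply, if_pos rfl, cExp_inl] at h_at_s
        have hus : s = u := by
          by_contra hne
          rw [if_neg hne] at h_at_s
          omega
        subst hus
        have he'r : e' (Sum.inl r) = e (Sum.inl r) - 1 := by
          rw [he'_def, Finsupp.tsub_apply, Finsupp.single_apply, if_pos rfl]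
        have h_at_r := Finsupp.le_def.mp hle (Sum.inl r)
        rw [Finsupp.add_apply, Finsupp.single_apply,
          if_neg (fun h => hs (Sum.inl_injective h)), cExp_inl,
          if_neg (fun h => hs h.symm), he'r] at h_at_r
        have ha1 : e (Sum.inl r) = 1 := by omega
        have hles : ∀ k, e (Sum.inr k) ≤ g s k := by
          intro k
          have hk := Finsupp.le_def.mp hle (Sum.inr k)
          rw [Finsupp.add_apply, Finsupp.single_apply, if_neg (by simp), cExp_inr] at hk
          have hk2 : e' (Sum.inr k) = e (Sum.inr k) := by
            rw [he'_def, Finsupp.tsub_apply, Finsupp.single_apply, if_neg (by simp)]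
            omega
          omega
        have hUe : degU e = ∑ k, e (Sum.inr k) := rfl
        have hpt_s : ∀ k, e (Sum.inr k) = g s k := by
          by_contra hc
          push_neg at hc
          obtain ⟨k, hk⟩ := hc
          have hlt : ∑ k, e (Sum.inr k) < ∑ k, g s k :=
            Finset.sum_lt_sum (fun k _ => hles k)
              ⟨k, Finset.mem_univ k, lt_of_le_of_ne (hles k) hk⟩
          rw [hgdeg s] at hlt
          omega
        have hler : ∀ k, e (Sum.inr k) ≤ g r k := by
          intro k
          have hk := Finsupp.le_def.mp hr (Sum.inr k)
          rwa [cExp_inr] at hk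
        have hpt_r : ∀ k, e (Sum.inr k) = g r k := by
          by_contra hc
          push_neg at hc
          obtain ⟨k, hk⟩ := hc
          have hlt : ∑ k, e (Sum.inr k) < ∑ k, g r k :=
            Finset.sum_lt_sum (fun k _ => hler k)
              ⟨k, Finset.mem_univ k, lt_of_le_of_ne (hler k) hk⟩
          rw [hgdeg r] at hlt
          omega
        have hgsr : g s = g r := Finsupp.ext fun k => by rw [← hpt_s k, hpt_r k]
        exact hs (hginj hgsr)
      rw [hz, zero_mul, map_zero]
    · intro h
      exact absurd (Finset.mem_univ r) h
  · push_neg at hex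
    have h0 : Emap f (monomial e (1 : K)) = 0 := by
      rw [Emap_monomial hf]
      apply Finset.sum_eq_zero
      intro u _
      rw [(dnu_eq_zero_iff _ _).mpr (hex u), zero_mul, map_zero]
    rw [h0]
    exact Submodule.zero_mem _

end AuxCore
section AuxInj

set_option linter.unusedSectionVars false

variable {K : Type*} [Field K] [CharZero K] {n m : ℕ} {d₁ d₂ : ℕ}
  {g : Fin (n + 1) → (Fin m →₀ ℕ)}

theorem inj_step (hginj : Function.Injective g) {f : MvPolynomial (Fin (n + 1) ⊕ Fin m) K}
    (hf : f = ∑ r, monomial (cExp d₁ g r) (1 : K)) (i : ℕ) (hi : i < d₁)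
    (e : (Fin (n + 1) ⊕ Fin m) →₀ ℕ) (he : degX e + degU e = i) (t : K) :
    Psi g (Dmap (∑ r, X (Sum.inl r)) (Emap f (monomial e t))) = Emap f (monomial e t) := by
  classical
  rw [Emap_monomial hf, map_sum, map_sum]
  refine Finset.sum_congr rfl fun r _ => ?_
  by_cases hle : e ≤ cExp d₁ g r
  case neg =>
    rw [(dnu_eq_zero_iff _ _).mpr hle, zero_mul, map_zero, map_zero, map_zero]
  case pos =>
  set u := (dnu (cExp d₁ g r) e : K) * t with hu
  set c := cExp d₁ g r - e with hc
  have hcr : c (Sum.inl r) = d₁ - e (Sum.inl r) := by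
    rw [hc, Finsupp.tsub_apply, cExp_inl, if_pos rfl]
  have hcs : ∀ s, s ≠ r → c (Sum.inl s) = 0 := by
    intro s hs
    rw [hc, Finsupp.tsub_apply, cExp_inl, if_neg hs]
    omega
  have ha_le : e (Sum.inl r) ≤ i := by
    have h1 : degX e = e (Sum.inl r) := degX_eq_of_le hle
    omega
  have hd1a : 1 ≤ d₁ - e (Sum.inl r) := by omega
  have step1 : Dmap (∑ s, X (Sum.inl s)) (monomial c u) =
      monomial (c - Finsupp.single (Sum.inl r) 1) (((d₁ - e (Sum.inl r) : ℕ) : K) * u) := by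
    rw [Dmap_L_monomial, Finset.sum_eq_single r]
    · rw [hcr]
    · intro s _ hs
      rw [hcs s hs, Nat.cast_zero, zero_mul, map_zero]
    · intro h
      exact absurd (Finset.mem_univ r) h
  rw [step1, Psi_monomial]
  set χ := c - Finsupp.single (Sum.inl r) 1 with hχ
  have hχr : χ (Sum.inl r) = d₁ - e (Sum.inl r) - 1 := by
    rw [hχ, Finsupp.tsub_apply, hcr, Finsupp.single_apply, if_pos rfl]
  have hχs : ∀ s, s ≠ r → χ (Sum.inl s) = 0 := by
    intro s hs
    rw [hχ, Finsupp.tsub_apply, hcs s hs]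
    omega
  have hexp : χ + Finsupp.single (Sum.inl r) 1 = c := by
    ext x
    rw [Finsupp.add_apply, hχ, Finsupp.tsub_apply]
    by_cases hx : x = Sum.inl r
    · subst hx
      rw [Finsupp.single_apply, if_pos rfl, hcr]
      omega
    · rw [Finsupp.single_apply, if_neg (fun h => hx h.symm)]
      omega
  by_cases hcase : e (Sum.inl r) + 1 < d₁
  · have hne : χ (Sum.inl r) ≠ 0 := by omega
    rw [psiFun_pos g hne (fun s hs => by
      by_contra hsr
      exact hs (hχs s hsr))]
    rw [hexp, hχr, show d₁ - e (Sum.inl r) - 1 + 1 = d₁ - e (Sum.inl r) from by omega]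
    rw [smul_smul, MvPolynomial.smul_monomial, smul_eq_mul, mul_one]
    congr 1
    have hcast : ((d₁ - e (Sum.inl r) : ℕ) : K) ≠ 0 := Nat.cast_ne_zero.mpr (by omega)
    field_simp
  · have ha : e (Sum.inl r) = d₁ - 1 := by omega
    have hai : e (Sum.inl r) = i := by omega
    have hdegU0 : degU e = 0 := by
      have h1 : degX e = e (Sum.inl r) := degX_eq_of_le hle
      omega
    have heinr : ∀ k, e (Sum.inr k) = 0 := by
      intro k
      have h0 : ∑ j, e (Sum.inr j) = 0 := hdegU0
      exact Finset.sum_eq_zero_iff.mp h0 k (Finset.mem_univ k)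
    have hz : ∀ s, χ (Sum.inl s) = 0 := by
      intro s
      by_cases hs : s = r
      · subst hs
        rw [hχr]
        omega
      · exact hχs s hs
    have hχmap : χ = (g r).mapDomain Sum.inr := by
      ext x
      cases x with
      | inl s => rw [Finsupp.mapDomain_notin_range _ _ (by simp), hz s]
      | inr k =>
        rw [Finsupp.mapDomain_apply Sum.inr_injective, hχ, Finsupp.tsub_apply,
          Finsupp.single_apply, if_neg (by simp), hc, Finsupp.tsub_apply, cExp_inr, heinr k]
        omega
    rw [psiFun_g hginj hz hχmap, hexp]
    rw [MvPolynomial.smul_monomial, smul_eq_mul, mul_one]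
    congr 1
    rw [show d₁ - e (Sum.inl r) = 1 from by omega, Nat.cast_one, one_mul]

end AuxInj
section AuxKey

set_option linter.unusedSectionVars false

open Module

variable {K : Type*} [Field K] [CharZero K] {n m : ℕ} {d₁ d₂ : ℕ}
  {g : Fin (n + 1) → (Fin m →₀ ℕ)}

/-- The space of `j`-th order partial derivatives of `f`. -/
noncomputable def Wsp (f : MvPolynomial (Fin (n + 1) ⊕ Fin m) K) (j : ℕ) :
    Submodule K (MvPolynomial (Fin (n + 1) ⊕ Fin m) K) :=
  ((bihom K fun c => degX c + degU c = j).map (Emap f))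

instance Wsp_fd (f : MvPolynomial (Fin (n + 1) ⊕ Fin m) K) (j : ℕ) :
    Module.Finite K (Wsp f j) :=
  Module.Finite.map _ _

theorem mul_L_mem {α : MvPolynomial (Fin (n + 1) ⊕ Fin m) K} (j : ℕ)
    (hα : α ∈ bihom K fun c => degX c + degU c = j) :
    (∑ r, X (Sum.inl r) : MvPolynomial (Fin (n + 1) ⊕ Fin m) K) * α ∈
      (bihom K fun c => degX c + degU c = j + 1) := by
  classical
  rw [← support_sum_monomial_coeff α, Finset.mul_sum]
  apply Submodule.sum_mem
  intro c hc
  rw [Finset.sum_mul]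
  apply Submodule.sum_mem
  intro s _
  rw [show (X (Sum.inl s) : MvPolynomial (Fin (n + 1) ⊕ Fin m) K) =
    monomial (Finsupp.single (Sum.inl s) 1) 1 from rfl, monomial_mul, one_mul]
  refine monomial_mem_bihom ?_ _
  have hdc := hα c hc
  rw [degX_add, degU_add, degX_single_inl, degU_single_inl]
  omega

theorem DW_le (f : MvPolynomial (Fin (n + 1) ⊕ Fin m) K) (j : ℕ) :
    Submodule.map (Dmap (∑ r, X (Sum.inl r))) (Wsp f j) ≤ Wsp f (j + 1) := by
  rintro x ⟨w, ⟨α, hα, rfl⟩, rfl⟩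
  exact ⟨_ * α, mul_L_mem j hα, (Dmap_Emap _ f α).symm⟩

theorem case_inj (hginj : Function.Injective g) {f : MvPolynomial (Fin (n + 1) ⊕ Fin m) K}
    (hf : f = ∑ r, monomial (cExp d₁ g r) (1 : K)) (i : ℕ) (hi : i < d₁) :
    ∀ w ∈ Wsp f i, Psi g (Dmap (∑ r, X (Sum.inl r)) w) = w := by
  rintro _ ⟨α, hα, rfl⟩
  classical
  rw [← support_sum_monomial_coeff α, map_sum, map_sum, map_sum]
  exact Finset.sum_congr rfl fun c hc => inj_step hginj hf i hi c (hα c hc) (coeff c α)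

theorem case_surj (hd : d₂ ≤ d₁) (hgdeg : ∀ r, (∑ k, g r k) = d₂)
    (hginj : Function.Injective g) {f : MvPolynomial (Fin (n + 1) ⊕ Fin m) K}
    (hf : f = ∑ r, monomial (cExp d₁ g r) (1 : K)) (i : ℕ) (hi : d₁ ≤ i) :
    Wsp f (i + 1) ≤ Submodule.map (Dmap (∑ r, X (Sum.inl r))) (Wsp f i) := by
  rintro _ ⟨α, hα, rfl⟩
  classical
  rw [← support_sum_monomial_coeff α, map_sum]
  apply Submodule.sum_mem
  intro c hc
  rw [show (monomial c (coeff c α) : MvPolynomial (Fin (n + 1) ⊕ Fin m) K) =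
    coeff c α • monomial c 1 from by rw [MvPolynomial.smul_monomial, smul_eq_mul, mul_one],
    map_smul]
  exact Submodule.smul_mem _ _ (surj_step hd hgdeg hginj hf i hi c (hα c hc))

theorem key_rank (hd : d₂ ≤ d₁) (hgdeg : ∀ r, (∑ k, g r k) = d₂)
    (hginj : Function.Injective g) {f : MvPolynomial (Fin (n + 1) ⊕ Fin m) K}
    (hf : f = ∑ r, monomial (cExp d₁ g r) (1 : K)) (i : ℕ) :
    finrank K (Submodule.map (Dmap (∑ r, X (Sum.inl r))) (Wsp f i)) =
      min (finrank K (Wsp f i)) (finrank K (Wsp f (i + 1))) := by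
  rcases lt_or_ge i d₁ with hi | hi
  · have heq : finrank K (Submodule.map (Dmap (∑ r, X (Sum.inl r))) (Wsp f i)) =
        finrank K (Wsp f i) := by
      have h := finrank_map_eq_of_ker (Wsp f i) (Dmap (∑ r, X (Sum.inl r)))
        (LinearMap.id (R := K)) (fun x hx => by
          constructor
          · intro h0
            have := case_inj hginj hf i hi x hx
            rw [h0, map_zero] at this
            rw [LinearMap.id_apply, ← this]
          · intro h0
            rw [LinearMap.id_apply] at h0
            rw [h0, map_zero])
      rwa [Submodule.map_id] at h
    have hle2 : finrank K (Submodule.map (Dmap (∑ r, X (Sum.inl r))) (Wsp f i)) ≤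
        finrank K (Wsp f (i + 1)) := Submodule.finrank_mono (DW_le f i)
    rw [heq] at hle2
    rw [heq, min_eq_left hle2]
  · have heq : Submodule.map (Dmap (∑ r, X (Sum.inl r))) (Wsp f i) = Wsp f (i + 1) :=
      le_antisymm (DW_le f i) (case_surj hd hgdeg hginj hf i hi)
    have hle : finrank K (Wsp f (i + 1)) ≤ finrank K (Wsp f i) := by
      rw [← heq]
      exact Submodule.finrank_map_le _ _
    rw [heq, min_eq_right hle]

end AuxKey
set_option maxHeartbeats 2000000 in
open MvPolynomial in
theorem stmt_11 {K : Type*} [Field K] [CharZero K] (n m d₁ d₂ : ℕ)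
    (hmn : m ≤ n + 1) (hm : 2 ≤ m) (hd : d₂ ≤ d₁) (hd₂ : 2 ≤ d₂)
    (g : Fin (n + 1) → (Fin m →₀ ℕ))
    (hgdeg : ∀ r, (∑ k, g r k) = d₂)
    (hginj : Function.Injective g)
    (f : MvPolynomial (Fin (n + 1) ⊕ Fin m) K)
    (hf : f = ∑ r, X (Sum.inl r) ^ d₁ * monomial ((g r).mapDomain Sum.inr) 1)
    (l : MvPolynomial (Fin (n + 1) ⊕ Fin m) K ⧸ dAnn f)
    (hl : l = Ideal.Quotient.mk (dAnn f) (∑ r, X (Sum.inl r))) :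
    -- the class of `L = X_0 + ⋯ + X_n` is a weak Lefschetz element: multiplication
    -- by `l` from `A_i` to `A_{i+1}` has maximal rank for every `i`
    l ∈ Adeg f 1 ∧
    (∀ i : ℕ,
      Module.finrank K ((Adeg f i).map (LinearMap.mulLeft K l)) =
        min (Module.finrank K (Adeg f i)) (Module.finrank K (Adeg f (i + 1)))) ∧
    -- in particular `A` has the Weak Lefschetz Property
    (∃ l' : MvPolynomial (Fin (n + 1) ⊕ Fin m) K ⧸ dAnn f, l' ∈ Adeg f 1 ∧
      ∀ i : ℕ,
        Module.finrank K ((Adeg f i).map (LinearMap.mulLeft K l')) =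
          min (Module.finrank K (Adeg f i)) (Module.finrank K (Adeg f (i + 1)))) := by
  classical
  have hfc : f = ∑ r, monomial (cExp d₁ g r) (1 : K) := by
    rw [hf]
    refine Finset.sum_congr rfl fun r _ => ?_
    rw [X_pow_eq_monomial, monomial_mul, one_mul]
    rfl
  set L : MvPolynomial (Fin (n + 1) ⊕ Fin m) K := ∑ r, X (Sum.inl r) with hLdef
  set π : MvPolynomial (Fin (n + 1) ⊕ Fin m) K →ₗ[K]
      (MvPolynomial (Fin (n + 1) ⊕ Fin m) K ⧸ dAnn f) :=
    (Ideal.Quotient.mkₐ K (dAnn f)).toLinearMap with hπdef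
  have hπ0 : ∀ x, π x = 0 ↔ Emap f x = 0 := by
    intro x
    show Ideal.Quotient.mkₐ K (dAnn f) x = 0 ↔ _
    rw [Ideal.Quotient.mkₐ_eq_mk, Ideal.Quotient.eq_zero_iff_mem]
    exact mem_dAnn
  have hrank : ∀ j, Module.finrank K (Adeg f j) = Module.finrank K (Wsp f j) := fun j =>
    finrank_map_eq_of_ker _ π (Emap f) (fun x _ => hπ0 x)
  have hL : l = π L := by
    rw [hl]
    show _ = Ideal.Quotient.mkₐ K (dAnn f) L
    rw [Ideal.Quotient.mkₐ_eq_mk]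
  have hcomp : (LinearMap.mulLeft K l) ∘ₗ π = π ∘ₗ (LinearMap.mulLeft K L) := by
    apply LinearMap.ext
    intro x
    simp only [LinearMap.comp_apply, LinearMap.mulLeft_apply]
    rw [hL]
    show Ideal.Quotient.mkₐ K (dAnn f) L * Ideal.Quotient.mkₐ K (dAnn f) x =
      Ideal.Quotient.mkₐ K (dAnn f) (L * x)
    rw [map_mul]
  have hcomp2 : (Emap f) ∘ₗ (LinearMap.mulLeft K L) = (Dmap L) ∘ₗ (Emap f) := by
    apply LinearMap.ext
    intro x
    simp only [LinearMap.comp_apply, LinearMap.mulLeft_apply]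
    exact (Dmap_Emap L f x).symm
  have memA1 : l ∈ Adeg f 1 := by
    refine ⟨L, ?_, hL.symm⟩
    apply Submodule.sum_mem
    intro r _
    refine monomial_mem_bihom ?_ (1 : K)
    rw [degX_single_inl, degU_single_inl]
  have main : ∀ i : ℕ,
      Module.finrank K ((Adeg f i).map (LinearMap.mulLeft K l)) =
        min (Module.finrank K (Adeg f i)) (Module.finrank K (Adeg f (i + 1))) := by
    intro i
    calc Module.finrank K ((Adeg f i).map (LinearMap.mulLeft K l))
        = Module.finrank K (((bihom K fun c => degX c + degU c = i).map
            ((LinearMap.mulLeft K l) ∘ₗ π))) := by rw [Submodule.map_comp]; rfl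
      _ = Module.finrank K (((bihom K fun c => degX c + degU c = i).map
            (π ∘ₗ (LinearMap.mulLeft K L)))) := by rw [hcomp]
      _ = Module.finrank K (((bihom K fun c => degX c + degU c = i).map
            ((Emap f) ∘ₗ (LinearMap.mulLeft K L)))) :=
          finrank_map_eq_of_ker _ _ _ (fun x _ => by
            simp only [LinearMap.comp_apply, LinearMap.mulLeft_apply]
            exact hπ0 (L * x))
      _ = Module.finrank K (((bihom K fun c => degX c + degU c = i).map
            ((Dmap L) ∘ₗ (Emap f)))) := by rw [hcomp2]
      _ = Module.finrank K (Submodule.map (Dmap L) (Wsp f i)) := by rw [Submodule.map_comp]; rfl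
      _ = min (Module.finrank K (Wsp f i)) (Module.finrank K (Wsp f (i + 1))) :=
          key_rank hd hgdeg hginj hfc i
      _ = min (Module.finrank K (Adeg f i)) (Module.finrank K (Adeg f (i + 1))) := by
          rw [hrank i, hrank (i + 1)]
  exact ⟨memA1, main, l, memA1, main⟩

end CW
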